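/- Let f : R → A be a local homomorphism of commutative local rings with maximal ideals 𝔪_R and 𝔪, residue fields κ_R = R/𝔪_R and κ = A/𝔪. Let Ã = κ ⊗_R A, let M̃ be the kernel of the evaluation map Ã → κ, and let ϑ : 𝔪/𝔪² → M̃/M̃² be the κ-linear map induced by a ↦ 1⊗a. If ϑ is bijective, then the canonical κ-linear map Φ : Der_R(A, κ) → T^Zar, sending a derivation D to the map it induces on 𝔪/𝔪², is bijective. -/

import Mathlib

open IsLocalRing TensorProduct

section RelTangent

variable (R A : Type*) [CommRing R] [CommRing A] [IsLocalRing R] [IsLocalRing A]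
  [Algebra R A] [IsLocalHom (algebraMap R A)]

/-- The image in `𝔪_A` of an element of `𝔪_R` under the local homomorphism `R → A`. -/
def mapMax (r : maximalIdeal R) : maximalIdeal A :=
  ⟨algebraMap R A r, by
    rw [IsLocalRing.mem_maximalIdeal, mem_nonunits_iff]
    exact fun h => mem_nonunits_iff.mp ((IsLocalRing.mem_maximalIdeal _).mp r.2)
      (IsLocalHom.map_nonunit _ h)⟩

/-- The class in `𝔪_A/𝔪_A²` of the image of an element of `𝔪_R`; the map
`j : 𝔪_R/𝔪_R² → 𝔪_A/𝔪_A²` induced by `R → A` sends the class of `r` to `jClass R A r`. -/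
noncomputable def jClass (r : maximalIdeal R) : (maximalIdeal A).Cotangent :=
  (maximalIdeal A).toCotangent (mapMax R A r)

/-- The Zariski relative tangent space: the space of `κ`-linear forms on `𝔪_A/𝔪_A²`
vanishing on the image of `j : 𝔪_R/𝔪_R² → 𝔪_A/𝔪_A²`. -/
noncomputable def TZar : Submodule (ResidueField A)
    ((maximalIdeal A).Cotangent →ₗ[ResidueField A] ResidueField A) :=
  ⨅ r : maximalIdeal R, LinearMap.ker (LinearMap.applyₗ (jClass R A r))

instance : IsScalarTower R A (ResidueField A) :=
  IsScalarTower.of_algebraMap_eq fun x =>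
    (IsLocalRing.ResidueField.map_residue (algebraMap R A) x).symm

/-- The evaluation map `Ã = κ ⊗_R A → κ`, `λ ⊗ a ↦ λ·a(x)`. -/
noncomputable def ev : (ResidueField A ⊗[R] A) →ₐ[ResidueField A] ResidueField A :=
  Algebra.TensorProduct.lift (AlgHom.id _ _) (IsScalarTower.toAlgHom R A (ResidueField A))
    fun _ _ => Commute.all _ _

/-- The ideal `M̃ = ker(ev) ⊆ Ã`. -/
noncomputable def Mker : Ideal (ResidueField A ⊗[R] A) := RingHom.ker (ev R A)

/-- For `m ∈ 𝔪`, the element `1 ⊗ m` of `M̃`. -/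
noncomputable def oneTmul (m : maximalIdeal A) : Mker R A :=
  ⟨(1 : ResidueField A) ⊗ₜ[R] (m : A), by
    simp only [Mker, RingHom.mem_ker, ev, Algebra.TensorProduct.lift_tmul, map_one, one_mul,
      AlgHom.coe_id, id_eq, IsScalarTower.coe_toAlgHom', ResidueField.algebraMap_eq]
    exact Ideal.Quotient.eq_zero_iff_mem.mpr m.2⟩

/-- For `a : A`, the element `1 ⊗ a − a(x) ⊗ 1` of `M̃`. -/
noncomputable def gen (a : A) : Mker R A :=
  ⟨(1 : ResidueField A) ⊗ₜ[R] a - residue A a ⊗ₜ[R] (1 : A), by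
    simp [Mker, RingHom.mem_ker, ev, Algebra.TensorProduct.lift_tmul]⟩

end RelTangent

section Aux

variable (R A : Type*) [CommRing R] [CommRing A] [IsLocalRing R] [IsLocalRing A]
  [Algebra R A] [IsLocalHom (algebraMap R A)]

local notation "κ" => ResidueField A
local notation "Ã" => ResidueField A ⊗[R] A

lemma ev_tmul (lam : κ) (a : A) : ev R A (lam ⊗ₜ[R] a) = lam * residue A a := by
  simp [ev, Algebra.TensorProduct.lift_tmul, ResidueField.algebraMap_eq]

/-- base-changed derivation -/
noncomputable def Dtilde (D : Derivation R A κ) : Ã →ₗ[κ] κ :=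
  LinearMap.liftBaseChange κ (D : A →ₗ[R] κ)

lemma Dtilde_tmul (D : Derivation R A κ) (lam : κ) (a : A) :
    Dtilde R A D (lam ⊗ₜ[R] a) = lam * D a := rfl

end Aux

section Aux2

variable (R A : Type*) [CommRing R] [CommRing A] [IsLocalRing R] [IsLocalRing A]
  [Algebra R A] [IsLocalHom (algebraMap R A)]

local notation "κ" => ResidueField A
local notation "Ã" => ResidueField A ⊗[R] A

lemma Dtilde_mul (D : Derivation R A κ) (z w : Ã) :
    Dtilde R A D (z * w) = ev R A z * Dtilde R A D w + ev R A w * Dtilde R A D z := by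
  induction z using TensorProduct.induction_on with
  | zero => simp
  | tmul lam a =>
    induction w using TensorProduct.induction_on with
    | zero => simp
    | tmul mu b =>
      rw [Algebra.TensorProduct.tmul_mul_tmul, Dtilde_tmul, Dtilde_tmul, Dtilde_tmul,
        ev_tmul, ev_tmul, Derivation.leibniz, Algebra.smul_def, Algebra.smul_def,
        ResidueField.algebraMap_eq]
      ring
    | add w₁ w₂ h1 h2 =>
      rw [mul_add, map_add, h1, h2, map_add, map_add]
      ring
  | add z₁ z₂ h1 h2 =>
    rw [add_mul, map_add, h1, h2, map_add, map_add]
    ring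

lemma ev_mem_eq_zero {z : Ã} (hz : z ∈ Mker R A) :
    ev R A z = 0 := hz

lemma Dtilde_mul_mem (D : Derivation R A κ) {z w : Ã} (hz : z ∈ Mker R A)
    (hw : w ∈ Mker R A) : Dtilde R A D (z * w) = 0 := by
  rw [Dtilde_mul, ev_mem_eq_zero R A hz, ev_mem_eq_zero R A hw, zero_mul, zero_mul, add_zero]

end Aux2

section Aux3

variable (R A : Type*) [CommRing R] [CommRing A] [IsLocalRing R] [IsLocalRing A]
  [Algebra R A] [IsLocalHom (algebraMap R A)]

local notation "κ" => ResidueField A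
local notation "Ã" => ResidueField A ⊗[R] A

/-- restriction of `Dtilde` to `M̃`, as a `κ`-linear map -/
noncomputable def hD (D : Derivation R A κ) : (Mker R A) →ₗ[κ] κ :=
  (Dtilde R A D).comp (((Mker R A).subtype).restrictScalars κ)

lemma hD_apply (D : Derivation R A κ) (m : Mker R A) : hD R A D m = Dtilde R A D m := rfl

lemma hD_ker (D : Derivation R A κ) :
    ((Mker R A • ⊤ : Submodule Ã (Mker R A)).restrictScalars κ) ≤ LinearMap.ker (hD R A D) := by
  intro x hx
  rw [Submodule.restrictScalars_mem] at hx
  rw [LinearMap.mem_ker]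
  refine Submodule.smul_induction_on hx (fun z hz m _ => ?_) (fun x y hx hy => ?_)
  · have : hD R A D (z • m) = Dtilde R A D (z * (m : Ã)) := rfl
    rw [this, Dtilde_mul_mem R A D hz m.2]
  · rw [map_add, hx, hy, add_zero]

/-- the induced functional on `M̃/M̃²` -/
noncomputable def ellD (D : Derivation R A κ) : (Mker R A).Cotangent →ₗ[κ] κ :=
  (Submodule.liftQ _ (hD R A D) (hD_ker R A D)).comp
    (Submodule.Quotient.restrictScalarsEquiv κ
      (Mker R A • ⊤ : Submodule Ã (Mker R A))).symm.toLinearMap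

lemma ellD_toCotangent (D : Derivation R A κ) (m : Mker R A) :
    ellD R A D ((Mker R A).toCotangent m) = Dtilde R A D m := rfl

end Aux3

section Aux4

variable (R A : Type*) [CommRing R] [CommRing A] [IsLocalRing R] [IsLocalRing A]
  [Algebra R A] [IsLocalHom (algebraMap R A)]

local notation "κ" => ResidueField A
local notation "Ã" => ResidueField A ⊗[R] A

lemma gen_coe (a : A) : (gen R A a : Ã) = (1 : κ) ⊗ₜ[R] a - residue A a ⊗ₜ[R] (1 : A) := rfl

lemma gen_add (a b : A) : gen R A (a + b) = gen R A a + gen R A b := by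
  apply Subtype.ext
  simp only [gen_coe, Submodule.coe_add, map_add, TensorProduct.tmul_add,
    TensorProduct.add_tmul]
  ring

lemma gen_smul (r : R) (a : A) : gen R A (r • a) = r • gen R A a := by
  apply Subtype.ext
  have h1 : residue A (r • a) = r • residue A a := by
    rw [Algebra.smul_def, Algebra.smul_def, map_mul, ← ResidueField.algebraMap_eq,
      ← IsScalarTower.algebraMap_apply]
  simp only [gen_coe, SetLike.val_smul_of_tower, h1, smul_sub, TensorProduct.smul_tmul',
    TensorProduct.tmul_smul]

lemma gen_one : gen R A 1 = 0 := by
  apply Subtype.ext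
  simp [gen_coe]

lemma gen_leibniz (a b : A) :
    (Mker R A).toCotangent (gen R A (a * b)) =
      residue A a • (Mker R A).toCotangent (gen R A b) +
        residue A b • (Mker R A).toCotangent (gen R A a) := by
  rw [← LinearMap.map_smul_of_tower, ← LinearMap.map_smul_of_tower, ← map_add,
    Ideal.toCotangent_eq, pow_two]
  have : ((gen R A (a * b) : Ã) -
        ((residue A a • gen R A b + residue A b • gen R A a : Mker R A) : Ã))
      = (gen R A a : Ã) * (gen R A b : Ã) := by
    simp only [Submodule.coe_add, SetLike.val_smul_of_tower, gen_coe, map_mul, smul_sub,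
      TensorProduct.smul_tmul', smul_eq_mul, mul_one, sub_mul, mul_sub,
      Algebra.TensorProduct.tmul_mul_tmul, one_mul]
    ring
  rw [this]
  exact Ideal.mul_mem_mul (gen R A a).2 (gen R A b).2

lemma Dtilde_gen (D : Derivation R A κ) (a : A) :
    Dtilde R A D (gen R A a : Ã) = D a := by
  rw [gen_coe, map_sub, Dtilde_tmul, Dtilde_tmul, Derivation.map_one_eq_zero]
  simp

lemma Dtilde_oneTmul (D : Derivation R A κ) (m : maximalIdeal A) :
    Dtilde R A D ((oneTmul R A m : Ã)) = D m := by
  have : (oneTmul R A m : Ã) = (1 : κ) ⊗ₜ[R] (m : A) := rfl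
  rw [this, Dtilde_tmul, one_mul]

end Aux4

section Aux5

variable (R A : Type*) [CommRing R] [CommRing A] [IsLocalRing R] [IsLocalRing A]
  [Algebra R A] [IsLocalHom (algebraMap R A)]

local notation "κ" => ResidueField A
local notation "Ã" => ResidueField A ⊗[R] A

/-- `z ↦ z - ev z ⊗ 1` as a map into `M̃`. -/
noncomputable def g0 (z : Ã) : Mker R A :=
  ⟨z - ev R A z ⊗ₜ[R] (1 : A), by
    have : ev R A (ev R A z ⊗ₜ[R] (1 : A)) = ev R A z := by
      rw [ev_tmul, map_one, mul_one]
    simp only [Mker, RingHom.mem_ker, map_sub, this, sub_self]⟩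

lemma g0_add (z w : Ã) : g0 R A (z + w) = g0 R A z + g0 R A w := by
  apply Subtype.ext
  simp only [g0, map_add, Submodule.coe_add, TensorProduct.add_tmul]
  ring

lemma g0_tmul (lam : κ) (a : A) : g0 R A (lam ⊗ₜ[R] a) = lam • gen R A a := by
  apply Subtype.ext
  simp only [g0, ev_tmul, SetLike.val_smul_of_tower, gen_coe, smul_sub,
    TensorProduct.smul_tmul', smul_eq_mul, mul_one]

lemma g0_mem (m : Mker R A) : g0 R A (m : Ã) = m := by
  apply Subtype.ext
  have : ev R A (m : Ã) = 0 := m.2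
  simp only [g0, this, TensorProduct.zero_tmul, sub_zero]

/-- The derivation associated to a functional on `M̃/M̃²`. -/
noncomputable def derOf (ℓ : (Mker R A).Cotangent →ₗ[κ] κ) : Derivation R A κ where
  toFun a := ℓ ((Mker R A).toCotangent (gen R A a))
  map_add' a b := by rw [gen_add, map_add, map_add]
  map_smul' r a := by
    rw [gen_smul, LinearMap.map_smul_of_tower, LinearMap.map_smul_of_tower, RingHom.id_apply]
  map_one_eq_zero' := by
    simp only [LinearMap.coe_mk, AddHom.coe_mk]
    rw [gen_one, map_zero, map_zero]
  leibniz' a b := by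
    simp only [LinearMap.coe_mk, AddHom.coe_mk]
    rw [gen_leibniz, map_add, LinearMap.map_smul, LinearMap.map_smul, smul_eq_mul, smul_eq_mul]
    rw [Algebra.smul_def (R := A), Algebra.smul_def (R := A), ResidueField.algebraMap_eq]

lemma derOf_apply (ℓ : (Mker R A).Cotangent →ₗ[κ] κ) (a : A) :
    derOf R A ℓ a = ℓ ((Mker R A).toCotangent (gen R A a)) := rfl

lemma Dtilde_derOf (ℓ : (Mker R A).Cotangent →ₗ[κ] κ) (z : Ã) :
    Dtilde R A (derOf R A ℓ) z = ℓ ((Mker R A).toCotangent (g0 R A z)) := by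
  induction z using TensorProduct.induction_on with
  | zero =>
    have : g0 R A (0 : Ã) = 0 := by
      apply Subtype.ext; simp [g0]
    rw [map_zero, this, map_zero, map_zero]
  | tmul lam a =>
    rw [Dtilde_tmul, g0_tmul, LinearMap.map_smul_of_tower, LinearMap.map_smul,
      derOf_apply, smul_eq_mul]
  | add z w hz hw =>
    rw [map_add, hz, hw, g0_add, map_add, map_add]

lemma ellD_derOf (ℓ : (Mker R A).Cotangent →ₗ[κ] κ) : ellD R A (derOf R A ℓ) = ℓ := by
  apply LinearMap.ext
  intro x
  obtain ⟨m, rfl⟩ := Ideal.toCotangent_surjective (Mker R A) x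
  rw [ellD_toCotangent, Dtilde_derOf, g0_mem]

end Aux5

section Aux6

variable (R A : Type*) [CommRing R] [CommRing A] [IsLocalRing R] [IsLocalRing A]
  [Algebra R A] [IsLocalHom (algebraMap R A)]

local notation "κ" => ResidueField A
local notation "Ã" => ResidueField A ⊗[R] A

lemma oneTmul_mapMax (r : maximalIdeal R) : oneTmul R A (mapMax R A r) = 0 := by
  apply Subtype.ext
  have h0 : ((r : R) • (1 : κ)) = 0 := by
    rw [Algebra.smul_def, mul_one, IsScalarTower.algebraMap_apply R A κ,
      ResidueField.algebraMap_eq]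
    exact Ideal.Quotient.eq_zero_iff_mem.mpr (mapMax R A r).2
  have h1 : (oneTmul R A (mapMax R A r) : Ã) = (1 : κ) ⊗ₜ[R] (algebraMap R A (r : R)) := rfl
  rw [h1, Algebra.algebraMap_eq_smul_one, TensorProduct.tmul_smul, TensorProduct.smul_tmul', h0,
    TensorProduct.zero_tmul]
  rfl

lemma Dtilde_add_apply (D D' : Derivation R A κ) (z : Ã) :
    Dtilde R A (D + D') z = Dtilde R A D z + Dtilde R A D' z := by
  induction z using TensorProduct.induction_on with
  | zero => simp
  | tmul lam a => rw [Dtilde_tmul, Dtilde_tmul, Dtilde_tmul, Derivation.add_apply]; ring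
  | add z w hz hw => rw [map_add, map_add, map_add, hz, hw]; ring

lemma Dtilde_smul_apply (c : κ) (D : Derivation R A κ) (z : Ã) :
    Dtilde R A (c • D) z = c * Dtilde R A D z := by
  induction z using TensorProduct.induction_on with
  | zero => simp
  | tmul lam a => rw [Dtilde_tmul, Dtilde_tmul, Derivation.smul_apply, smul_eq_mul]; ring
  | add z w hz hw => rw [map_add, map_add, hz, hw]; ring

lemma ellD_add (D D' : Derivation R A κ) :
    ellD R A (D + D') = ellD R A D + ellD R A D' := by
  apply LinearMap.ext; intro x
  obtain ⟨m, rfl⟩ := Ideal.toCotangent_surjective (Mker R A) x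
  rw [LinearMap.add_apply, ellD_toCotangent, ellD_toCotangent, ellD_toCotangent,
    Dtilde_add_apply]

lemma ellD_smul (c : κ) (D : Derivation R A κ) :
    ellD R A (c • D) = c • ellD R A D := by
  apply LinearMap.ext; intro x
  obtain ⟨m, rfl⟩ := Ideal.toCotangent_surjective (Mker R A) x
  rw [LinearMap.smul_apply, ellD_toCotangent, ellD_toCotangent, Dtilde_smul_apply,
    smul_eq_mul]

end Aux6


/-- Let `f : R → A` be a local homomorphism of commutative local rings with
residue field `κ`, `Ã = κ ⊗_R A`, `M̃` the kernel of the evaluation map `Ã → κ`, and let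
`ϑ : 𝔪/𝔪² → M̃/M̃²` be the `κ`-linear map induced by `a ↦ 1 ⊗ a`.  If `ϑ` is bijective, then
the canonical `κ`-linear map `Φ : Der_R(A, κ) → T^Zar`, sending a derivation `D` to the map it
induces on `𝔪/𝔪²`, is bijective. -/
theorem stmt_8 (R A : Type*) [CommRing R] [CommRing A] [IsLocalRing R] [IsLocalRing A]
    [Algebra R A] [IsLocalHom (algebraMap R A)]
    (ϑ : (maximalIdeal A).Cotangent →ₗ[ResidueField A] (Mker R A).Cotangent)
    (hϑ : ∀ m : maximalIdeal A,
      ϑ ((maximalIdeal A).toCotangent m) = (Mker R A).toCotangent (oneTmul R A m))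
    (hbij : Function.Bijective ϑ) :
    ∃ Φ : Derivation R A (ResidueField A) →ₗ[ResidueField A] TZar R A,
      (∀ (D : Derivation R A (ResidueField A)) (m : maximalIdeal A),
        ((Φ D : (maximalIdeal A).Cotangent →ₗ[ResidueField A] ResidueField A))
          ((maximalIdeal A).toCotangent m) = D m) ∧
      Function.Bijective Φ := by
  have hjz : ∀ r : maximalIdeal R, jClass R A r = 0 := by
    intro r
    apply hbij.1
    rw [map_zero, jClass, hϑ (mapMax R A r), oneTmul_mapMax, map_zero]
  have hmem : ∀ g : (maximalIdeal A).Cotangent →ₗ[ResidueField A] ResidueField A,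
      g ∈ TZar R A := by
    intro g
    rw [TZar]
    refine (Submodule.mem_iInf _).mpr fun r => LinearMap.mem_ker.mpr ?_
    show g (jClass R A r) = 0
    rw [hjz r, map_zero]
  refine ⟨{ toFun := fun D => ⟨(ellD R A D).comp ϑ, hmem _⟩
            map_add' := fun D D' => by
              apply Subtype.ext
              simp only [Submodule.coe_add]
              rw [ellD_add, LinearMap.add_comp]
            map_smul' := fun c D => by
              apply Subtype.ext
              simp only [SetLike.val_smul, RingHom.id_apply]
              rw [ellD_smul, LinearMap.smul_comp] }, ?_, ?_, ?_⟩
  · intro D m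
    simp only [LinearMap.coe_mk, AddHom.coe_mk, LinearMap.coe_comp, Function.comp_apply]
    rw [hϑ m, ellD_toCotangent, Dtilde_oneTmul]
  · -- injective
    intro D D' h
    have h2 : (ellD R A D).comp ϑ = (ellD R A D').comp ϑ := congrArg Subtype.val h
    have h3 : ellD R A D = ellD R A D' := by
      apply LinearMap.ext; intro y
      obtain ⟨x, rfl⟩ := hbij.2 y
      exact LinearMap.congr_fun h2 x
    apply Derivation.ext; intro a
    have := LinearMap.congr_fun h3 ((Mker R A).toCotangent (gen R A a))
    rwa [ellD_toCotangent, ellD_toCotangent, Dtilde_gen, Dtilde_gen] at this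
  · -- surjective
    rintro ⟨g, hg⟩
    set e := LinearEquiv.ofBijective ϑ hbij with he
    refine ⟨derOf R A (g.comp (e.symm :
      (Mker R A).Cotangent →ₗ[ResidueField A] (maximalIdeal A).Cotangent)), ?_⟩
    apply Subtype.ext
    simp only [LinearMap.coe_mk, AddHom.coe_mk]
    rw [ellD_derOf]
    apply LinearMap.ext; intro x
    simp only [LinearMap.coe_comp, Function.comp_apply, LinearEquiv.coe_coe]
    have : ϑ x = e x := rfl
    rw [this, LinearEquiv.symm_apply_apply]
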